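/- Let m ≥ 2 and k ≥ 1, and let T_{m,k} be the balanced m-ary tree of depth k (the rooted tree in which every non-leaf vertex has exactly m children and every leaf is at distance k from the root, so that T_{m,k} has (m^{k+1}-1)/(m-1) vertices). Then π(T_{m,k}) = (m^{k+1} + (-1)^k)/(m+1), i.e., the minimum cardinality of a set of vertices that propagates to T_{m,k} equals (m^{k+1} + (-1)^k)/(m+1). -/

import Mathlib

/-- The propagation closure: `PropReach G S v` means vertex `v` eventually receives the
information when the process starts from the set `S` on the graph `G`.  A vertex `w` can be
added whenever some vertex `v` already having the information is adjacent to `w` and every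
neighbour of `v` other than `w` already has the information. -/
inductive PropReach {V : Type*} (G : SimpleGraph V) (S : Set V) : V → Prop
  | base {v : V} (hv : v ∈ S) : PropReach G S v
  | step {v w : V} (hv : PropReach G S v) (hadj : G.Adj v w)
      (hall : ∀ x : V, G.Adj v x → x ≠ w → PropReach G S x) : PropReach G S w

/-- `S ↷ G` : the set `S` propagates to (all of) the graph `G`. -/
def Propagates {V : Type*} (G : SimpleGraph V) (S : Set V) : Prop :=
  ∀ v : V, PropReach G S v

/-- `π(G)`: the minimum cardinality of a set of vertices propagating to `G`. -/
noncomputable def propNum {V : Type*} (G : SimpleGraph V) : ℕ :=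
  sInf {n : ℕ | ∃ S : Set V, S.ncard = n ∧ Propagates G S}

/-- The balanced `m`-ary tree of depth `d`: vertices are words over an alphabet of
size `m` of length at most `d` (the root is the empty word), and each vertex `l` of
length `< d` is adjacent to its `m` children `x :: l`. -/
def BalancedTree (m d : ℕ) : SimpleGraph {l : List (Fin m) // l.length ≤ d} where
  Adj a b := (∃ x : Fin m, (a : List (Fin m)) = x :: (b : List (Fin m))) ∨
             (∃ x : Fin m, (b : List (Fin m)) = x :: (a : List (Fin m)))
  symm := ⟨fun a b h => h.symm⟩
  loopless := ⟨by
    rintro a (⟨x, hx⟩ | ⟨x, hx⟩) <;> simpa using congrArg List.length hx⟩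

open Finset

section Extraction

variable {V : Type*} (G : SimpleGraph V) (S : Set V)

/-- Reversed "forcing order" lists: the head is the most recently forced vertex. -/
def GoodR : List V → Prop
  | [] => True
  | (w :: rest) => GoodR rest ∧ w ∉ S ∧ w ∉ rest ∧
      ∃ u, (u ∈ S ∨ u ∈ rest) ∧ G.Adj u w ∧
        ∀ x, G.Adj u x → x ≠ w → (x ∈ S ∨ x ∈ rest)

lemma goodR_nodup : ∀ L, GoodR G S L → L.Nodup := by
  intro L
  induction L with
  | nil => intro _; exact List.nodup_nil
  | cons w rest ih =>
    intro h
    exact List.nodup_cons.2 ⟨h.2.2.1, ih h.1⟩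

lemma propReach_subset_closed (P : Set V) (hS : S ⊆ P)
    (hcl : ∀ u w, u ∈ P → G.Adj u w → (∀ x, G.Adj u x → x ≠ w → x ∈ P) → w ∈ P) :
    ∀ v, PropReach G S v → v ∈ P := by
  intro v h
  induction h with
  | base hv => exact hS hv
  | step hv hadj hall ih ihall => exact hcl _ _ ih hadj ihall

lemma goodR_spec : ∀ (L : List V), GoodR G S L → ∀ (i : ℕ) (h : i < L.length),
    L.get ⟨i, h⟩ ∉ S ∧
    ∃ u, (u ∈ S ∨ u ∈ L.drop (i+1)) ∧ G.Adj u (L.get ⟨i, h⟩) ∧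
      ∀ x, G.Adj u x → x ≠ L.get ⟨i, h⟩ → (x ∈ S ∨ x ∈ L.drop (i+1)) := by
  intro L
  induction L with
  | nil => intro _ i h; simp at h
  | cons w rest ih =>
    intro hg i h
    match i with
    | 0 => exact ⟨hg.2.1, hg.2.2.2⟩
    | (i+1) =>
      have h' : i < rest.length := by simpa using h
      exact ih hg.1 i h'

lemma exists_chains [Fintype V] (h : Propagates G S) :
    ∃ (n : ℕ) (L U : Fin n → V), Function.Injective L ∧ Function.Injective U ∧
      (∀ i, G.Adj (U i) (L i)) ∧ (∀ i, L i ∉ S) ∧ (∀ v, v ∉ S → ∃ i, L i = v) := by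
  classical
  -- a good list of maximal length
  set A : Set ℕ := {n | ∃ L, GoodR G S L ∧ L.length = n} with hA
  have hne : A.Nonempty := ⟨0, [], trivial, rfl⟩
  have hbdd : BddAbove A := by
    refine ⟨Fintype.card V, ?_⟩
    rintro n ⟨L, hL, rfl⟩
    exact List.Nodup.length_le_card (goodR_nodup G S L hL)
  obtain ⟨Lm, hLm, hlen⟩ := Nat.sSup_mem hne hbdd
  have hmax : ∀ L', GoodR G S L' → L'.length ≤ Lm.length := by
    intro L' hL'
    rw [hlen]
    exact le_csSup hbdd ⟨L', hL', rfl⟩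
  -- the closure is everything
  have hcover : ∀ v : V, v ∈ S ∨ v ∈ Lm := by
    intro v
    refine propReach_subset_closed G S {v | v ∈ S ∨ v ∈ Lm} (fun x hx => Or.inl hx) ?_ v (h v)
    intro u w hu hadj hall
    by_contra hw
    simp only [Set.mem_setOf_eq, not_or] at hw
    have : GoodR G S (w :: Lm) :=
      ⟨hLm, hw.1, hw.2, u, hu, hadj, fun x hx hxw => hall x hx hxw⟩
    have := hmax _ this
    simp at this
  -- define L and U
  refine ⟨Lm.length, fun i => Lm.get i, fun i => Classical.choose
    ((goodR_spec G S Lm hLm i i.2).2), ?_, ?_, ?_, ?_, ?_⟩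
  · exact List.nodup_iff_injective_get.1 (goodR_nodup G S Lm hLm)
  · -- U injective
    intro i j hij
    by_contra hne
    have hne' : Lm.get i ≠ Lm.get j := fun e =>
      hne (List.nodup_iff_injective_get.1 (goodR_nodup G S Lm hLm) e)
    -- helper: from the spec at index j, L i lands in S or strictly earlier part
    have key : ∀ i j : Fin Lm.length,
        Classical.choose ((goodR_spec G S Lm hLm i i.2).2) =
        Classical.choose ((goodR_spec G S Lm hLm j j.2).2) →
        Lm.get i ≠ Lm.get j → (j : ℕ) < (i : ℕ) := by
      intro i j hu hneq
      obtain ⟨hmem, hadj, hall⟩ := Classical.choose_spec ((goodR_spec G S Lm hLm j j.2).2)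
      obtain ⟨hmemi, hadji, halli⟩ := Classical.choose_spec ((goodR_spec G S Lm hLm i i.2).2)
      have hadj' : G.Adj (Classical.choose ((goodR_spec G S Lm hLm j j.2).2)) (Lm.get i) := by
        rw [← hu]; exact hadji
      have := hall _ hadj' hneq
      rcases this with hS | hdrop
      · exact absurd hS ((goodR_spec G S Lm hLm i i.2).1)
      · obtain ⟨⟨k, hk⟩, hkeq⟩ := List.mem_iff_get.1 hdrop
        have hlt : (j : ℕ) + 1 + k < Lm.length := by
          have := hk; simp [List.length_drop] at this; omega
        have : Lm.get ⟨(j : ℕ) + 1 + k, hlt⟩ = Lm.get i := by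
          rw [← hkeq]; simp only [List.get_eq_getElem, List.getElem_drop]
        have := List.nodup_iff_injective_get.1 (goodR_nodup G S Lm hLm) this
        have : (j : ℕ) + 1 + k = (i : ℕ) := congrArg Fin.val this
        omega
    have h1 := key i j hij hne'
    have h2 := key j i hij.symm hne'.symm
    omega
  · intro i
    exact (Classical.choose_spec ((goodR_spec G S Lm hLm i i.2).2)).2.1
  · intro i
    exact (goodR_spec G S Lm hLm i i.2).1
  · intro v hv
    rcases hcover v with hS | hmem
    · exact absurd hS hv
    · obtain ⟨i, hi⟩ := List.mem_iff_get.1 hmem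
      exact ⟨i, hi⟩

end Extraction

-- assume defs from part1 exist; here test standalone pieces
noncomputable instance btvFintype (m K : ℕ) : Fintype {l : List (Fin m) // l.length ≤ K} :=
  (List.finite_length_le (Fin m) K).fintype

def lvlEquiv (m K j : ℕ) (hj : j ≤ K) :
    {v : {l : List (Fin m) // l.length ≤ K} // v.1.length = j} ≃ List.Vector (Fin m) j where
  toFun v := ⟨v.1.1, v.2⟩
  invFun w := ⟨⟨w.1, le_trans (le_of_eq w.2) hj⟩, w.2⟩
  left_inv v := by ext : 2 <;> rfl
  right_inv w := rfl

lemma card_level (m K j : ℕ) (hj : j ≤ K) :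
    (univ.filter fun v : {l : List (Fin m) // l.length ≤ K} => v.1.length = j).card = m ^ j := by
  classical
  rw [← Fintype.card_subtype]
  rw [Fintype.card_congr (lvlEquiv m K j hj), card_vector, Fintype.card_fin]

lemma card_btv (m K : ℕ) :
    Fintype.card {l : List (Fin m) // l.length ≤ K} = ∑ j ∈ range (K+1), m ^ j := by
  classical
  rw [← card_univ]
  rw [card_eq_sum_card_fiberwise (f := fun v : {l : List (Fin m) // l.length ≤ K} => v.1.length)
    (t := range (K+1)) (fun v _ => by simpa using Nat.lt_succ_of_le v.2)]
  exact Finset.sum_congr rfl fun j hj => card_level m K j (by simpa using Nat.lt_succ_iff.1 (mem_range.1 hj))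

def Bfun (m : ℕ) : ℕ → ℕ
  | 0 => 0
  | 1 => 2
  | (K+2) => Bfun m K + 2 * m ^ (K+1)

lemma sum_le_B (m : ℕ) : ∀ (K : ℕ) (c : ℕ → ℕ), c 0 = 0 →
    (∀ j, j + 1 ≤ K → c j + c (j+1) ≤ 2 * m ^ j) → ∑ j ∈ range (K+1), c j ≤ Bfun m K
  | 0, c, h0, _ => by simp [Bfun, h0]
  | 1, c, h0, hc => by
      have h01 := hc 0 le_rfl
      simp only [pow_zero, mul_one, zero_add] at h01
      simp only [Bfun, Finset.sum_range_succ, Finset.sum_range_zero, Finset.sum_range_one, h0, zero_add]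
      omega
  | (K+2), c, h0, hc => by
      have ih := sum_le_B m K c h0 (fun j hj => hc j (by omega))
      rw [Finset.sum_range_succ, Finset.sum_range_succ]
      have hlast := hc (K+1) (by omega)
      have hcc : K + 1 + 1 = K + 2 := rfl
      rw [hcc] at hlast
      have hB : Bfun m (K+2) = Bfun m K + 2 * m ^ (K+1) := rfl
      omega

lemma PK (m : ℕ) : ∀ K : ℕ,
    ((m:ℤ)+1) * ((∑ j ∈ range (K+1), (m:ℤ)^j) - Bfun m K) = (m:ℤ)^(K+1) + (-1)^K
  | 0 => by simp [Bfun]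
  | 1 => by
      simp only [Bfun, Finset.sum_range_succ, Finset.sum_range_zero]
      push_cast
      ring
  | (K+2) => by
      have ih := PK m K
      have hB : (Bfun m (K+2) : ℤ) = Bfun m K + 2 * (m:ℤ) ^ (K+1) := by
        show ((Bfun m K + 2 * m ^ (K+1) : ℕ) : ℤ) = _
        push_cast; ring
      rw [Finset.sum_range_succ, Finset.sum_range_succ, hB]
      linear_combination ih

lemma adj_lengths {m K : ℕ} {a b : {l : List (Fin m) // l.length ≤ K}}
    (h : (BalancedTree m K).Adj a b) :
    a.1.length = b.1.length + 1 ∨ b.1.length = a.1.length + 1 := by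
  rcases h with ⟨x, hx⟩ | ⟨x, hx⟩
  · left; rw [hx]; rfl
  · right; rw [hx]; rfl

lemma lower_bound (m K : ℕ) (S : Set {l : List (Fin m) // l.length ≤ K})
    (h : Propagates (BalancedTree m K) S) :
    (m:ℤ)^(K+1) + (-1:ℤ)^K ≤ ((m:ℤ)+1) * S.ncard := by
  classical
  obtain ⟨n, L, U, hLinj, hUinj, hadj, hLS, hcov⟩ := exists_chains (BalancedTree m K) S h
  have hSfin : S.toFinset.card = S.ncard := (Set.ncard_eq_toFinset_card' S).symm
  have himg : (univ.image L) = S.toFinsetᶜ := by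
    ext v
    simp only [mem_image, mem_compl, Set.mem_toFinset]
    constructor
    · rintro ⟨i, _, rfl⟩; exact hLS i
    · intro hv; obtain ⟨i, hi⟩ := hcov v hv; exact ⟨i, mem_univ i, hi⟩
  have hn : n + S.ncard = Fintype.card {l : List (Fin m) // l.length ≤ K} := by
    have h1 : (univ.image L).card = n := by
      rw [Finset.card_image_of_injective _ hLinj, card_univ, Fintype.card_fin]
    have h2 := Finset.card_compl (S.toFinset)
    have h3 := Finset.card_le_univ (S.toFinset)
    rw [← hSfin, ← h1, himg]
    omega
  set c : ℕ → ℕ := fun j =>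
    (univ.filter fun i => max (L i).1.length (U i).1.length = j).card with hcdef
  have hsum : ∑ j ∈ range (K+1), c j = n := by
    rw [← card_eq_sum_card_fiberwise
      (f := fun i => max (L i).1.length (U i).1.length) (s := univ) (t := range (K+1))
      (fun i _ => by simpa using Nat.lt_succ_of_le (max_le (L i).2 (U i).2))]
    rw [card_univ, Fintype.card_fin]
  have hc0 : c 0 = 0 := by
    rw [hcdef]
    rw [Finset.card_eq_zero, Finset.filter_eq_empty_iff]
    intro i _
    have hx := adj_lengths (hadj i)
    have h1 := Nat.le_max_left (L i).1.length (U i).1.length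
    have h2 := Nat.le_max_right (L i).1.length (U i).1.length
    rcases hx with hx | hx <;> omega
  have hconstraint : ∀ j, j + 1 ≤ K → c j + c (j+1) ≤ 2 * m ^ j := by
    intro j hj
    set s : Finset (Fin n) :=
      univ.filter (fun i => max (L i).1.length (U i).1.length = j ∨
        max (L i).1.length (U i).1.length = j + 1) with hsdef
    have hcards : c j + c (j+1) = s.card := by
      rw [hsdef, Finset.filter_or, Finset.card_union_of_disjoint]
      rw [Finset.disjoint_left]
      intro i hi1 hi2
      simp only [mem_filter] at hi1 hi2
      omega
    set φ : Fin n → {l : List (Fin m) // l.length ≤ K} :=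
      fun i => if (L i).1.length = j then L i else U i with hφdef
    have himage : s.image φ ⊆ univ.filter (fun v => v.1.length = j) := by
      intro v hv
      simp only [mem_image] at hv
      obtain ⟨i, hi, rfl⟩ := hv
      simp only [hsdef, mem_filter, mem_univ, true_and] at hi
      simp only [mem_filter, mem_univ, true_and]
      have hx := adj_lengths (hadj i)
      have h3 := max_choice (L i).1.length (U i).1.length
      by_cases hLj : (L i).1.length = j
      · simp only [hφdef, if_pos hLj]; exact hLj
      · simp only [hφdef, if_neg hLj]
        rcases hx with hx | hx <;> rcases h3 with h3 | h3 <;> rcases hi with hi | hi <;> omega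
    have hfiber : ∀ v ∈ s.image φ, (s.filter fun i => φ i = v).card ≤ 2 := by
      intro v _
      have hsub : (s.filter fun i => φ i = v) ⊆
          (univ.filter fun i => L i = v) ∪ (univ.filter fun i => U i = v) := by
        intro i hi
        simp only [mem_filter, mem_univ, true_and, mem_union] at hi ⊢
        by_cases hLj : (L i).1.length = j
        · left; rw [← hi.2, hφdef]; simp [hLj]
        · right; rw [← hi.2, hφdef]; simp [hLj]
      have h1 : (univ.filter fun i => L i = v).card ≤ 1 := by
        apply Finset.card_le_one.2
        intro a ha b hb
        simp only [mem_filter, mem_univ, true_and] at ha hb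
        exact hLinj (ha.trans hb.symm)
      have h2 : (univ.filter fun i => U i = v).card ≤ 1 := by
        apply Finset.card_le_one.2
        intro a ha b hb
        simp only [mem_filter, mem_univ, true_and] at ha hb
        exact hUinj (ha.trans hb.symm)
      calc (s.filter fun i => φ i = v).card
          ≤ ((univ.filter fun i => L i = v) ∪ (univ.filter fun i => U i = v)).card :=
            Finset.card_le_card hsub
        _ ≤ _ := Finset.card_union_le _ _
        _ ≤ 2 := by omega
    calc c j + c (j+1) = s.card := hcards
      _ ≤ 2 * (s.image φ).card := Finset.card_le_mul_card_image s 2 hfiber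
      _ ≤ 2 * (univ.filter (fun v : {l : List (Fin m) // l.length ≤ K} =>
            v.1.length = j)).card := by
            exact Nat.mul_le_mul_left 2 (Finset.card_le_card himage)
      _ = 2 * m ^ j := by rw [card_level m K j (by omega)]
  have hnB : n ≤ Bfun m K := by
    rw [← hsum]
    exact sum_le_B m K c hc0 hconstraint
  have hcard : ((Fintype.card {l : List (Fin m) // l.length ≤ K} : ℤ)) =
      ∑ j ∈ range (K+1), (m:ℤ)^j := by
    rw [card_btv m K]
    push_cast
    rfl
  have hSn : (S.ncard : ℤ) =
      (Fintype.card {l : List (Fin m) // l.length ≤ K} : ℤ) - n := by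
    have := hn
    omega
  calc (m:ℤ)^(K+1) + (-1:ℤ)^K
      = ((m:ℤ)+1) * ((∑ j ∈ range (K+1), (m:ℤ)^j) - Bfun m K) := (PK m K).symm
    _ ≤ ((m:ℤ)+1) * ((∑ j ∈ range (K+1), (m:ℤ)^j) - n) := by
        apply mul_le_mul_of_nonneg_left _ (by positivity)
        apply sub_le_sub_left
        exact_mod_cast hnB
    _ = ((m:ℤ)+1) * S.ncard := by rw [hSn, hcard]

section Upper
variable (M : ℕ)

/-- triple (F,H,G) of pattern sets -/
def FHG : ℕ → Finset (List (Fin (M+2))) × Finset (List (Fin (M+2))) × Finset (List (Fin (M+2)))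
  | 0 => ({[]}, {[]}, ∅)
  | (k+1) =>
    let P := FHG k
    ( Finset.univ.biUnion (fun i : Fin (M+2) =>
        (if i = 0 then P.1 else P.2.1).image (· ++ [i])),
      Finset.univ.biUnion (fun i : Fin (M+2) =>
        (if i = 0 then P.1 else if i = 1 then P.2.2 else P.2.1).image (· ++ [i])),
      Finset.univ.biUnion (fun i : Fin (M+2) =>
        (if i = 0 then P.2.2 else P.2.1).image (· ++ [i])) )

lemma mem_biUnion_append {f : Fin (M+2) → Finset (List (Fin (M+2)))} {q : List (Fin (M+2))} :
    q ∈ Finset.univ.biUnion (fun i => (f i).image (· ++ [i])) ↔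
      ∃ (i : Fin (M+2)) (p : List (Fin (M+2))), p ∈ f i ∧ q = p ++ [i] := by
  simp only [Finset.mem_biUnion, Finset.mem_image, Finset.mem_univ, true_and]
  constructor
  · rintro ⟨i, p, hp, rfl⟩; exact ⟨i, p, hp, rfl⟩
  · rintro ⟨i, p, hp, rfl⟩; exact ⟨i, p, hp, rfl⟩

lemma card_biUnion_append (f : Fin (M+2) → Finset (List (Fin (M+2)))) :
    (Finset.univ.biUnion (fun i => (f i).image (· ++ [i]))).card = ∑ i, (f i).card := by
  rw [Finset.card_biUnion]
  · exact Finset.sum_congr rfl fun i _ =>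
      Finset.card_image_of_injective _ (fun a b hab => List.append_inj_left' hab rfl)
  · intro i _ j _ hij
    rw [Function.onFun, Finset.disjoint_left]
    rintro a hai haj
    simp only [Finset.mem_image] at hai haj
    obtain ⟨p, _, rfl⟩ := hai
    obtain ⟨q, _, he⟩ := haj
    exact hij (by simpa using (List.append_inj_right' he (by simp)).symm)

lemma sum_ite_fin (n : ℕ) (g : Fin (n+1) → ℕ) (a : ℕ) (hg : ∀ i, i ≠ 0 → g i = a) :
    ∑ i, g i = g 0 + n * a := by
  rw [Fin.sum_univ_succ]
  congr 1
  rw [Finset.sum_congr rfl (fun i _ => hg i.succ (Fin.succ_ne_zero i))]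
  simp [Finset.sum_const, mul_comm]

lemma FHG_succ_F (k : ℕ) : (FHG M (k+1)).1 = Finset.univ.biUnion (fun i : Fin (M+2) =>
    (if i = 0 then (FHG M k).1 else (FHG M k).2.1).image (· ++ [i])) := rfl

lemma FHG_succ_H (k : ℕ) : (FHG M (k+1)).2.1 = Finset.univ.biUnion (fun i : Fin (M+2) =>
    (if i = 0 then (FHG M k).1 else if i = 1 then (FHG M k).2.2 else (FHG M k).2.1).image
      (· ++ [i])) := rfl

lemma FHG_succ_G (k : ℕ) : (FHG M (k+1)).2.2 = Finset.univ.biUnion (fun i : Fin (M+2) =>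
    (if i = 0 then (FHG M k).2.2 else (FHG M k).2.1).image (· ++ [i])) := rfl

lemma FHG_length : ∀ k : ℕ,
    (∀ p ∈ (FHG M k).1, p.length = k) ∧ (∀ p ∈ (FHG M k).2.1, p.length = k) ∧
    (∀ p ∈ (FHG M k).2.2, p.length = k)
  | 0 => by
      refine ⟨?_, ?_, ?_⟩ <;> intro p hp <;>
        simp only [FHG, Finset.mem_singleton, Finset.notMem_empty] at hp
      · simp [hp]
      · simp [hp]
  | (k+1) => by
      have ih := FHG_length k
      refine ⟨?_, ?_, ?_⟩ <;> intro p hp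
      · rw [FHG_succ_F, mem_biUnion_append] at hp
        obtain ⟨i, q, hq, rfl⟩ := hp
        simp only [List.length_append, List.length_cons, List.length_nil]
        split at hq
        · rw [ih.1 q hq]
        · rw [ih.2.1 q hq]
      · rw [FHG_succ_H, mem_biUnion_append] at hp
        obtain ⟨i, q, hq, rfl⟩ := hp
        simp only [List.length_append, List.length_cons, List.length_nil]
        split at hq
        · rw [ih.1 q hq]
        · split at hq
          · rw [ih.2.2 q hq]
          · rw [ih.2.1 q hq]
      · rw [FHG_succ_G, mem_biUnion_append] at hp
        obtain ⟨i, q, hq, rfl⟩ := hp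
        simp only [List.length_append, List.length_cons, List.length_nil]
        split at hq
        · rw [ih.2.2 q hq]
        · rw [ih.2.1 q hq]

lemma FHG_cards : ∀ k : ℕ,
    (((M:ℤ)+3) * ((FHG M k).2.1.card : ℤ) = ((M:ℤ)+2)^(k+1) + (-1)^k) ∧
    ((FHG M k).1.card = (FHG M k).2.1.card + (if Even k then 0 else 1)) ∧
    ((FHG M k).2.2.card + (if Even k then 1 else 0) = (FHG M k).2.1.card)
  | 0 => by
      refine ⟨?_, ?_, ?_⟩ <;> simp [FHG]
      ring
  | (k+1) => by
      have ih := FHG_cards k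
      have hF : (FHG M (k+1)).1.card = (FHG M k).1.card + (M+1) * (FHG M k).2.1.card := by
        rw [FHG_succ_F, card_biUnion_append]
        rw [sum_ite_fin (M+1) _ ((FHG M k).2.1.card) (fun i hi => by rw [if_neg hi])]
        simp
      have hG : (FHG M (k+1)).2.2.card = (FHG M k).2.2.card + (M+1) * (FHG M k).2.1.card := by
        rw [FHG_succ_G, card_biUnion_append]
        rw [sum_ite_fin (M+1) _ ((FHG M k).2.1.card) (fun i hi => by rw [if_neg hi])]
        simp
      have hH : (FHG M (k+1)).2.1.card =
          (FHG M k).1.card + (FHG M k).2.2.card + M * (FHG M k).2.1.card := by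
        rw [FHG_succ_H, card_biUnion_append, Fin.sum_univ_succ]
        have hstep : ∀ i : Fin (M+1),
            ((if i.succ = 0 then (FHG M k).1 else if i.succ = 1 then (FHG M k).2.2
              else (FHG M k).2.1)).card
            = ((if i = 0 then (FHG M k).2.2 else (FHG M k).2.1)).card := by
          intro i
          rw [if_neg (Fin.succ_ne_zero i)]
          by_cases hi : i = 0
          · subst hi
            rw [if_pos (Fin.succ_zero_eq_one), if_pos rfl]
          · rw [if_neg (fun hcon => hi (by
              have := Fin.succ_injective _ (hcon.trans Fin.succ_zero_eq_one.symm)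
              exact this)), if_neg hi]
        rw [Finset.sum_congr rfl (fun i _ => hstep i)]
        rw [sum_ite_fin M _ ((FHG M k).2.1.card) (fun i hi => by rw [if_neg hi])]
        simp
        ring
      have e1 : (M+1) * (FHG M k).2.1.card = M * (FHG M k).2.1.card + (FHG M k).2.1.card := by
        ring
      rcases Nat.even_or_odd k with he | ho
      · have he1 : ¬ Even (k+1) := by simp [Nat.even_add_one, he]
        simp only [if_pos he, if_neg he1] at ih ⊢
        have hf' := ih.2.1
        have hg' := ih.2.2
        have hH' : (FHG M (k+1)).2.1.card + 1 = (M+2) * (FHG M k).2.1.card := by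
          have e2 : (M+2) * (FHG M k).2.1.card
              = M * (FHG M k).2.1.card + 2 * (FHG M k).2.1.card := by ring
          omega
        refine ⟨?_, by omega, by omega⟩
        have hHZ : ((FHG M (k+1)).2.1.card : ℤ) + 1 = ((M:ℤ)+2) * (FHG M k).2.1.card := by
          exact_mod_cast congrArg (Nat.cast : ℕ → ℤ) hH'
        have ih1 := ih.1
        rw [Even.neg_one_pow he] at ih1
        rw [Odd.neg_one_pow (by simpa [Nat.odd_add_one, Nat.not_odd_iff_even] using he)]
        linear_combination ((M:ℤ)+3) * hHZ + ((M:ℤ)+2) * ih1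
      · have hek : ¬ Even k := Nat.not_even_iff_odd.mpr ho
        have he1 : Even (k+1) := by simpa [Nat.even_add_one, Nat.not_even_iff_odd] using ho
        simp only [if_neg hek, if_pos he1] at ih ⊢
        have hf' := ih.2.1
        have hg' := ih.2.2
        have hH' : (FHG M (k+1)).2.1.card = (M+2) * (FHG M k).2.1.card + 1 := by
          have e2 : (M+2) * (FHG M k).2.1.card
              = M * (FHG M k).2.1.card + 2 * (FHG M k).2.1.card := by ring
          omega
        refine ⟨?_, by omega, by omega⟩
        have hHZ : ((FHG M (k+1)).2.1.card : ℤ) = ((M:ℤ)+2) * (FHG M k).2.1.card + 1 := by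
          exact_mod_cast congrArg (Nat.cast : ℕ → ℤ) hH'
        have ih1 := ih.1
        rw [Odd.neg_one_pow ho] at ih1
        rw [Even.neg_one_pow he1]
        linear_combination ((M:ℤ)+3) * hHZ + ((M:ℤ)+2) * ih1

end Upper
section Claims
variable (M K : ℕ)

def SubT (t : List (Fin (M+2))) (k : ℕ) : Set {l : List (Fin (M+2)) // l.length ≤ K} :=
  {v | ∃ p, p.length ≤ k ∧ v.1 = p ++ t}

lemma push_up {k : ℕ} {t : List (Fin (M+2))} (x : Fin (M+2)) (ht : t.length + (k+1) = K)
    {S : Set {l : List (Fin (M+2)) // l.length ≤ K}}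
    (hsub : ∀ v ∈ SubT M K (x :: t) k, PropReach (BalancedTree (M+2) K) S v)
    (hplen : t.length ≤ K) :
    PropReach (BalancedTree (M+2) K) S ⟨t, hplen⟩ := by
  have hclen : (x :: t).length ≤ K := by simp; omega
  refine PropReach.step (v := ⟨x :: t, hclen⟩) (hsub _ ⟨[], by simp, rfl⟩) (Or.inl ⟨x, rfl⟩) ?_
  intro z hz hne
  rcases hz with ⟨y, hy⟩ | ⟨y, hy⟩
  · exfalso
    apply hne
    apply Subtype.ext
    injection hy with h1 h2
    exact h2.symm
  · have hk1 : 1 ≤ k := by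
      have hz2 := z.2
      rw [hy] at hz2
      simp only [List.length_cons] at hz2
      omega
    exact hsub z ⟨[y], by simpa using hk1, hy⟩

lemma force_child {k : ℕ} {t : List (Fin (M+2))} (j : Fin (M+2)) (ht : t.length + (k+1) = K)
    {S : Set {l : List (Fin (M+2)) // l.length ≤ K}}
    (hpar : ∀ (y : Fin (M+2)) (t' : List (Fin (M+2))), t = y :: t' → ∀ h' : t'.length ≤ K,
      PropReach (BalancedTree (M+2) K) S ⟨t', h'⟩)
    (hself : ∀ h'' : t.length ≤ K, PropReach (BalancedTree (M+2) K) S ⟨t, h''⟩)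
    (hsibs : ∀ x : Fin (M+2), x ≠ j → ∀ v ∈ SubT M K (x :: t) k,
      PropReach (BalancedTree (M+2) K) S v)
    (hjlen : (j :: t).length ≤ K) : PropReach (BalancedTree (M+2) K) S ⟨j :: t, hjlen⟩ := by
  have htlen : t.length ≤ K := by simp only [List.length_cons] at hjlen; omega
  refine PropReach.step (v := ⟨t, htlen⟩) (hself _) (Or.inr ⟨j, rfl⟩) ?_
  intro z hz hne
  rcases hz with ⟨y, hy⟩ | ⟨y, hy⟩
  · exact hpar y z.1 hy z.2
  · have hyj : y ≠ j := fun e => hne (Subtype.ext (by rw [hy, e]))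
    exact hsibs y hyj z ⟨[], by simp, hy⟩

lemma subT_cases {t : List (Fin (M+2))} {k : ℕ} {v : {l : List (Fin (M+2)) // l.length ≤ K}}
    (hv : v ∈ SubT M K t (k+1)) :
    v.1 = t ∨ ∃ (x : Fin (M+2)) (q : List (Fin (M+2))), q.length ≤ k ∧ v.1 = q ++ (x :: t) := by
  obtain ⟨p, hp, hveq⟩ := hv
  rcases List.eq_nil_or_concat p with rfl | ⟨q, x, rfl⟩
  · left; simpa using hveq
  · right
    refine ⟨x, q, by simpa using hp, ?_⟩
    rw [hveq, List.concat_eq_append, List.append_assoc]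
    rfl

def HasSet (t : List (Fin (M+2))) (X : Finset (List (Fin (M+2))))
    (S : Set {l : List (Fin (M+2)) // l.length ≤ K}) : Prop :=
  ∀ p ∈ X, ∀ hp : (p ++ t).length ≤ K, (⟨p ++ t, hp⟩ : {l : List (Fin (M+2)) // l.length ≤ K}) ∈ S

lemma hasSet_child {t : List (Fin (M+2))} (i : Fin (M+2))
    {X Y : Finset (List (Fin (M+2)))} {S : Set {l : List (Fin (M+2)) // l.length ≤ K}}
    (himg : ∀ p ∈ Y, p ++ [i] ∈ X) (hX : HasSet M K t X S) : HasSet M K (i :: t) Y S := by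
  intro p hp hplen
  have he : (p ++ [i]) ++ t = p ++ (i :: t) := by
    rw [List.append_assoc]; rfl
  have h2 : ((p ++ [i]) ++ t).length ≤ K := by rw [he]; exact hplen
  have h3 : (⟨p ++ (i :: t), hplen⟩ : {l : List (Fin (M+2)) // l.length ≤ K})
      = ⟨(p ++ [i]) ++ t, h2⟩ := Subtype.ext he.symm
  rw [h3]
  exact hX (p ++ [i]) (himg p hp) h2
end Claims

theorem claims (M K : ℕ) : ∀ (k : ℕ) (t : List (Fin (M+2))), t.length + k = K →
    ∀ S : Set {l : List (Fin (M+2)) // l.length ≤ K},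
    (HasSet M K t (FHG M k).1 S →
      ∀ v ∈ SubT M K t k, PropReach (BalancedTree (M+2) K) S v)
  ∧ (HasSet M K t (FHG M k).2.1 S →
      (∀ (y : Fin (M+2)) (t' : List (Fin (M+2))), t = y :: t' → ∀ h' : t'.length ≤ K,
        PropReach (BalancedTree (M+2) K) S ⟨t', h'⟩) →
      ∀ v ∈ SubT M K t k, PropReach (BalancedTree (M+2) K) S v)
  ∧ (HasSet M K t (FHG M k).2.2 S →
      (∀ (y : Fin (M+2)) (t' : List (Fin (M+2))), t = y :: t' → ∀ h' : t'.length ≤ K,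
        PropReach (BalancedTree (M+2) K) S ⟨t', h'⟩) →
      (∀ h'' : t.length ≤ K, PropReach (BalancedTree (M+2) K) S ⟨t, h''⟩) →
      ∀ v ∈ SubT M K t k, PropReach (BalancedTree (M+2) K) S v)
  | 0 => by
    intro t ht S
    have ht2 : t.length = K := by omega
    clear ht
    have ht := ht2
    have hsing : ∀ v ∈ SubT M K t 0, v = (⟨t, le_of_eq ht⟩ : {l : List (Fin (M+2)) // l.length ≤ K}) := by
      rintro v ⟨p, hp, hveq⟩
      have hpnil : p = [] := List.length_eq_zero_iff.mp (Nat.le_zero.mp hp)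
      subst hpnil
      exact Subtype.ext (by simpa using hveq)
    refine ⟨?_, ?_, ?_⟩
    · intro hS v hv
      rw [hsing v hv]
      exact PropReach.base (hS [] (by simp [FHG]) (le_of_eq (by simpa using ht)))
    · intro hS _ v hv
      rw [hsing v hv]
      exact PropReach.base (hS [] (by simp [FHG]) (le_of_eq (by simpa using ht)))
    · intro _ _ hself v hv
      rw [hsing v hv]
      exact hself _
  | (k+1) => by
    intro t ht S
    have hchlen : ∀ i : Fin (M+2), (i :: t).length + k = K := by
      intro i; simp only [List.length_cons]; omega
    have htlen : t.length ≤ K := by omega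
    refine ⟨?_, ?_, ?_⟩
    -- Claim F
    · intro hS
      have hsub0 : ∀ v ∈ SubT M K ((0 : Fin (M+2)) :: t) k,
          PropReach (BalancedTree (M+2) K) S v := by
        refine (claims M K k (0 :: t) (hchlen 0) S).1 (hasSet_child M K 0 ?_ hS)
        intro p hp
        rw [FHG_succ_F, mem_biUnion_append]
        exact ⟨0, p, by rw [if_pos rfl]; exact hp, rfl⟩
      have hroot : PropReach (BalancedTree (M+2) K) S ⟨t, htlen⟩ :=
        push_up M K 0 (by omega) hsub0 htlen
      have hsubi : ∀ i : Fin (M+2), i ≠ 0 → ∀ v ∈ SubT M K (i :: t) k,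
          PropReach (BalancedTree (M+2) K) S v := by
        intro i hi
        refine (claims M K k (i :: t) (hchlen i) S).2.1 (hasSet_child M K i ?_ hS) ?_
        · intro p hp
          rw [FHG_succ_F, mem_biUnion_append]
          exact ⟨i, p, by rw [if_neg hi]; exact hp, rfl⟩
        · intro y t' he h'
          injection he with h1 h2
          subst h2
          exact hroot
      intro v hv
      rcases subT_cases M K hv with hvt | ⟨x, q, hq, hveq⟩
      · rw [show v = ⟨t, htlen⟩ from Subtype.ext hvt]
        exact hroot
      · by_cases hx : x = 0
        · subst hx; exact hsub0 v ⟨q, hq, hveq⟩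
        · exact hsubi x hx v ⟨q, hq, hveq⟩
    -- Claim H
    · intro hS hpar
      have hsub0 : ∀ v ∈ SubT M K ((0 : Fin (M+2)) :: t) k,
          PropReach (BalancedTree (M+2) K) S v := by
        refine (claims M K k (0 :: t) (hchlen 0) S).1 (hasSet_child M K 0 ?_ hS)
        intro p hp
        rw [FHG_succ_H, mem_biUnion_append]
        exact ⟨0, p, by rw [if_pos rfl]; exact hp, rfl⟩
      have hroot : PropReach (BalancedTree (M+2) K) S ⟨t, htlen⟩ :=
        push_up M K 0 (by omega) hsub0 htlen
      have hsubi : ∀ i : Fin (M+2), i ≠ 0 → i ≠ 1 → ∀ v ∈ SubT M K (i :: t) k,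
          PropReach (BalancedTree (M+2) K) S v := by
        intro i hi0 hi1
        refine (claims M K k (i :: t) (hchlen i) S).2.1 (hasSet_child M K i ?_ hS) ?_
        · intro p hp
          rw [FHG_succ_H, mem_biUnion_append]
          exact ⟨i, p, by rw [if_neg hi0, if_neg hi1]; exact hp, rfl⟩
        · intro y t' he h'
          injection he with h1 h2
          subst h2
          exact hroot
      have h1len : ((1 : Fin (M+2)) :: t).length ≤ K := by simp only [List.length_cons]; omega
      have h1r : PropReach (BalancedTree (M+2) K) S ⟨(1 : Fin (M+2)) :: t, h1len⟩ := by
        refine force_child M K 1 ht hpar (fun h'' => hroot) ?_ h1len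
        intro x hx1
        by_cases hx0 : x = 0
        · subst hx0; exact hsub0
        · exact hsubi x hx0 hx1
      have hsub1 : ∀ v ∈ SubT M K ((1 : Fin (M+2)) :: t) k,
          PropReach (BalancedTree (M+2) K) S v := by
        refine (claims M K k (1 :: t) (hchlen 1) S).2.2 (hasSet_child M K 1 ?_ hS) ?_ ?_
        · intro p hp
          rw [FHG_succ_H, mem_biUnion_append]
          refine ⟨1, p, ?_, rfl⟩
          rw [if_neg (by exact fun e => (by simpa using congrArg Fin.val e)), if_pos rfl]
          exact hp
        · intro y t' he h'
          injection he with h1 h2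
          subst h2
          exact hroot
        · intro h''
          exact h1r
      intro v hv
      rcases subT_cases M K hv with hvt | ⟨x, q, hq, hveq⟩
      · rw [show v = ⟨t, htlen⟩ from Subtype.ext hvt]
        exact hroot
      · by_cases hx0 : x = 0
        · subst hx0; exact hsub0 v ⟨q, hq, hveq⟩
        · by_cases hx1 : x = 1
          · subst hx1; exact hsub1 v ⟨q, hq, hveq⟩
          · exact hsubi x hx0 hx1 v ⟨q, hq, hveq⟩
    -- Claim G
    · intro hS hpar hself
      have hsubi : ∀ i : Fin (M+2), i ≠ 0 → ∀ v ∈ SubT M K (i :: t) k,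
          PropReach (BalancedTree (M+2) K) S v := by
        intro i hi
        refine (claims M K k (i :: t) (hchlen i) S).2.1 (hasSet_child M K i ?_ hS) ?_
        · intro p hp
          rw [FHG_succ_G, mem_biUnion_append]
          exact ⟨i, p, by rw [if_neg hi]; exact hp, rfl⟩
        · intro y t' he h'
          injection he with h1 h2
          subst h2
          exact hself h'
      have h0len : ((0 : Fin (M+2)) :: t).length ≤ K := by simp only [List.length_cons]; omega
      have h0r : PropReach (BalancedTree (M+2) K) S ⟨(0 : Fin (M+2)) :: t, h0len⟩ := by
        refine force_child M K 0 ht hpar hself ?_ h0len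
        intro x hx0
        exact hsubi x hx0
      have hsub0 : ∀ v ∈ SubT M K ((0 : Fin (M+2)) :: t) k,
          PropReach (BalancedTree (M+2) K) S v := by
        refine (claims M K k (0 :: t) (hchlen 0) S).2.2 (hasSet_child M K 0 ?_ hS) ?_ ?_
        · intro p hp
          rw [FHG_succ_G, mem_biUnion_append]
          exact ⟨0, p, by rw [if_pos rfl]; exact hp, rfl⟩
        · intro y t' he h'
          injection he with h1 h2
          subst h2
          exact hself h'
        · intro h''
          exact h0r
      intro v hv
      rcases subT_cases M K hv with hvt | ⟨x, q, hq, hveq⟩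
      · rw [show v = ⟨t, htlen⟩ from Subtype.ext hvt]
        exact hself htlen
      · by_cases hx : x = 0
        · subst hx; exact hsub0 v ⟨q, hq, hveq⟩
        · exact hsubi x hx v ⟨q, hq, hveq⟩

noncomputable def topSet (M K : ℕ) : Finset {l : List (Fin (M+2)) // l.length ≤ K} :=
  ((FHG M K).2.1.attach).map ⟨fun p => ⟨p.1, le_of_eq ((FHG_length M K).2.1 p.1 p.2)⟩,
    fun a b hab => Subtype.ext (by simpa using congrArg Subtype.val hab)⟩

lemma topSet_card (M K : ℕ) : (topSet M K).card = (FHG M K).2.1.card := by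
  simp [topSet]

lemma mem_topSet (M K : ℕ) {v : {l : List (Fin (M+2)) // l.length ≤ K}} :
    v ∈ topSet M K ↔ v.1 ∈ (FHG M K).2.1 := by
  simp only [topSet, Finset.mem_map, Finset.mem_attach, true_and, Function.Embedding.coeFn_mk]
  constructor
  · rintro ⟨a, ha⟩
    rw [← ha]
    exact a.2
  · intro hv
    exact ⟨⟨v.1, hv⟩, Subtype.ext rfl⟩

lemma topSet_propagates (M K : ℕ) :
    Propagates (BalancedTree (M+2) K) ↑(topSet M K) := by
  intro v
  refine (claims M K K [] (by simp) ↑(topSet M K)).2.1 ?_ ?_ v ?_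
  · intro p hp hplen
    have : (⟨p ++ [], hplen⟩ : {l : List (Fin (M+2)) // l.length ≤ K}).1 ∈ (FHG M K).2.1 := by
      simpa using hp
    exact (mem_topSet M K).2 this
  · intro y t' he h'
    exact absurd he (by simp)
  · exact ⟨v.1, v.2, (List.append_nil v.1).symm⟩


/-- For `m ≥ 2` and `k ≥ 1`, the minimum cardinality of a set of vertices
propagating to the balanced `m`-ary tree of depth `k` equals `(m^(k+1) + (-1)^k)/(m+1)`,
stated multiplicatively over `ℤ` to avoid division. -/
theorem propNum_balancedTree (m k : ℕ) (hm : 2 ≤ m) (hk : 1 ≤ k) :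
    ((m : ℤ) + 1) * (propNum (BalancedTree m k) : ℤ) = (m : ℤ) ^ (k + 1) + (-1) ^ k := by
  obtain ⟨M, rfl⟩ : ∃ M, m = M + 2 := ⟨m - 2, by omega⟩
  classical
  set A := (FHG M k).2.1.card with hA
  have hAZ : ((M:ℤ)+3) * A = ((M:ℤ)+2)^(k+1) + (-1)^k := (FHG_cards M k).1
  have hmem : A ∈ {n : ℕ | ∃ S : Set {l : List (Fin (M+2)) // l.length ≤ k},
      S.ncard = n ∧ Propagates (BalancedTree (M+2) k) S} := by
    refine ⟨↑(topSet M k), ?_, topSet_propagates M k⟩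
    rw [Set.ncard_coe_finset, topSet_card]
  have hlb : ∀ n ∈ {n : ℕ | ∃ S : Set {l : List (Fin (M+2)) // l.length ≤ k},
      S.ncard = n ∧ Propagates (BalancedTree (M+2) k) S}, A ≤ n := by
    rintro n ⟨S, rfl, hS⟩
    have h1 := lower_bound (M+2) k S hS
    have h2 : ((M:ℤ)+3) * A ≤ ((M:ℤ)+3) * S.ncard := by
      push_cast at h1 ⊢
      linarith [hAZ]
    have h3 : (A:ℤ) ≤ S.ncard := le_of_mul_le_mul_left h2 (by positivity)
    exact_mod_cast h3
  have hinf : propNum (BalancedTree (M+2) k) = A :=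
    le_antisymm (Nat.sInf_le hmem) (le_csInf ⟨A, hmem⟩ hlb)
  rw [hinf]
  push_cast at hAZ ⊢
  linear_combination hAZ
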